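/- For any probability measure μ on ℝ^d there exists a point x ∈ ℝ^d whose halfspace (Tukey) depth satisfies D(x;μ) ≥ 1/(d+1). -/

import Mathlib

open MeasureTheory Metric Set
open scoped ENNReal RealInnerProductSpace

namespace TukeyAux

variable {d : ℕ}

/-- The closed halfspace `{y | c ≤ ⟪u, y⟫}`. -/
def HS (u : EuclideanSpace ℝ (Fin d)) (c : ℝ) : Set (EuclideanSpace ℝ (Fin d)) :=
  {y | c ≤ ⟪u, y⟫}

lemma isClosed_HS (u : EuclideanSpace ℝ (Fin d)) (c : ℝ) : IsClosed (HS u c) :=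
  isClosed_le continuous_const (Continuous.inner continuous_const continuous_id)

lemma measurableSet_HS (u : EuclideanSpace ℝ (Fin d)) (c : ℝ) : MeasurableSet (HS u c) :=
  (isClosed_HS u c).measurableSet

lemma convex_HS (u : EuclideanSpace ℝ (Fin d)) (c : ℝ) : Convex ℝ (HS u c) :=
  convex_halfSpace_ge ⟨fun x y => inner_add_right u x y, fun r x => real_inner_smul_right u x r⟩ c

variable (μ : Measure (EuclideanSpace ℝ (Fin d))) [IsProbabilityMeasure μ]

/-- Tukey depth region: intersection of all closed halfspaces of `μ`-measure at least `t`. -/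
def K (t : ℝ) : Set (EuclideanSpace ℝ (Fin d)) :=
  ⋂ (p : EuclideanSpace ℝ (Fin d) × ℝ) (_ : t ≤ (μ (HS p.1 p.2)).toReal), HS p.1 p.2

omit [IsProbabilityMeasure μ] in
lemma K_mono {s t : ℝ} (hst : s ≤ t) : K μ s ⊆ K μ t := by
  intro x hx
  refine mem_iInter₂.2 fun p hp => ?_
  exact mem_iInter₂.1 hx p (hst.trans hp)

omit [IsProbabilityMeasure μ] in
lemma isClosed_K (t : ℝ) : IsClosed (K μ t) :=
  isClosed_iInter fun p => isClosed_iInter fun _ => isClosed_HS p.1 p.2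

lemma toReal_compl (s : Set (EuclideanSpace ℝ (Fin d))) (hs : MeasurableSet s) :
    (μ sᶜ).toReal = 1 - (μ s).toReal := by
  rw [prob_compl_eq_one_sub hs, ENNReal.toReal_sub_of_le prob_le_one ENNReal.one_ne_top,
    ENNReal.toReal_one]

/-- There are closed balls catching all but `ε` of the measure. -/
lemma exists_ball (ε : ℝ) (hε : 0 < ε) :
    ∃ R : ℝ, 0 ≤ R ∧ (μ (closedBall (0 : EuclideanSpace ℝ (Fin d)) R)ᶜ).toReal < ε := by
  have hdir : Directed (· ⊆ ·) (fun n : ℕ => closedBall (0 : EuclideanSpace ℝ (Fin d)) n) := by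
    intro m n
    exact ⟨max m n, closedBall_subset_closedBall (by exact_mod_cast le_max_left m n),
      closedBall_subset_closedBall (by exact_mod_cast le_max_right m n)⟩
  have hsup : (⨆ n : ℕ, μ (closedBall (0 : EuclideanSpace ℝ (Fin d)) n)) = 1 := by
    rw [← hdir.measure_iUnion, iUnion_closedBall_nat]; exact measure_univ
  have hlt : ENNReal.ofReal (1 - ε) < ⨆ n : ℕ, μ (closedBall (0 : EuclideanSpace ℝ (Fin d)) n) := by
    rw [hsup]
    rcases le_or_gt (1 - ε) 0 with h | h
    · calc ENNReal.ofReal (1 - ε) = 0 := by simpa [ENNReal.ofReal_eq_zero] using h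
        _ < 1 := zero_lt_one
    · rw [show (1 : ℝ≥0∞) = ENNReal.ofReal 1 by simp]
      exact ENNReal.ofReal_lt_ofReal_iff (by norm_num) |>.2 (by linarith)
  rcases lt_iSup_iff.1 hlt with ⟨n, hn⟩
  refine ⟨n, Nat.cast_nonneg n, ?_⟩
  have h1 : 1 - ε < (μ (closedBall (0 : EuclideanSpace ℝ (Fin d)) n)).toReal := by
    rcases le_or_gt (1 - ε) 0 with h | h
    · have h0 : (0:ℝ) ≤ (μ (closedBall (0 : EuclideanSpace ℝ (Fin d)) n)).toReal :=
        ENNReal.toReal_nonneg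
      rcases eq_or_lt_of_le h with h' | h'
      · have hpos : (0:ℝ≥0∞) < μ (closedBall (0 : EuclideanSpace ℝ (Fin d)) n) :=
          lt_of_le_of_lt zero_le hn
        have := ENNReal.toReal_pos hpos.ne' (measure_ne_top μ _)
        linarith
      · linarith
    · have := (ENNReal.ofReal_lt_iff_lt_toReal h.le (measure_ne_top μ _)).1 hn
      linarith
  rw [toReal_compl μ _ measurableSet_closedBall]
  linarith

/-- Boundedness of the depth region. -/
lemma K_subset_ball {t R : ℝ} (hR : 0 ≤ R)
    (hμR : t ≤ (μ (closedBall (0 : EuclideanSpace ℝ (Fin d)) R)).toReal) :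
    K μ t ⊆ closedBall (0 : EuclideanSpace ℝ (Fin d)) R := by
  intro x hx
  rw [mem_closedBall_zero_iff]
  by_contra hxR
  push_neg at hxR
  have hball : closedBall (0 : EuclideanSpace ℝ (Fin d)) R ⊆ HS (-x) (-(R * ‖x‖)) := by
    intro y hy
    rw [mem_closedBall_zero_iff] at hy
    have h1 : ⟪x, y⟫ ≤ ‖x‖ * ‖y‖ := real_inner_le_norm x y
    have h2 : ‖x‖ * ‖y‖ ≤ ‖x‖ * R := by
      have := norm_nonneg x
      nlinarith
    simp only [HS, mem_setOf_eq, inner_neg_left]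
    nlinarith
  have hmem : t ≤ (μ (HS (-x) (-(R * ‖x‖)))).toReal :=
    hμR.trans (ENNReal.toReal_mono (measure_ne_top μ _) (measure_mono hball))
  have hxm := mem_iInter₂.1 hx (-x, -(R * ‖x‖)) hmem
  simp only [HS, mem_setOf_eq, inner_neg_left] at hxm
  rw [real_inner_self_eq_norm_mul_norm x] at hxm
  nlinarith [norm_nonneg x]

/-- Nonemptiness of the depth region, via Helly's theorem. -/
lemma K_nonempty {t : ℝ} (ht0 : (d : ℝ) / (d + 1) < t) (ht1 : t ≤ 1) :
    (K μ t).Nonempty := by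
  classical
  have hd1 : (0:ℝ) < (d:ℝ) + 1 := by positivity
  have hkey : ((d:ℝ) + 1) * (1 - t) < 1 := by
    have := (div_lt_iff₀ hd1).1 ht0
    nlinarith
  set ε : ℝ := (1 - ((d:ℝ) + 1) * (1 - t)) / 2 with hεdef
  have hε : 0 < ε := by simp only [hεdef]; linarith
  obtain ⟨R, hR0, hRε⟩ := exists_ball μ ε hε
  set B := closedBall (0 : EuclideanSpace ℝ (Fin d)) R with hB
  set G : {p : EuclideanSpace ℝ (Fin d) × ℝ // t ≤ (μ (HS p.1 p.2)).toReal} →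
      Set (EuclideanSpace ℝ (Fin d)) := fun i => HS i.1.1 i.1.2 ∩ B with hG
  have hGne : (⋂ i, G i).Nonempty := by
    apply Convex.helly_theorem_compact' (𝕜 := ℝ)
    · exact fun i => (convex_HS i.1.1 i.1.2).inter (convex_closedBall _ _)
    · exact fun i => (isCompact_closedBall _ _).inter_left (isClosed_HS i.1.1 i.1.2)
    · intro I hI
      rw [finrank_euclideanSpace_fin] at hI
      by_contra hemp
      rw [Set.not_nonempty_iff_eq_empty] at hemp
      have hcompl : (⋃ i ∈ I, (HS i.1.1 i.1.2)ᶜ) ∪ Bᶜ = univ := by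
        rw [eq_univ_iff_forall]
        intro y
        by_cases hyB : y ∈ B
        · by_cases hall : ∀ i ∈ I, y ∈ HS i.1.1 i.1.2
          · exfalso
            have : y ∈ ⋂ i ∈ I, G i := mem_iInter₂.2 fun i hi => ⟨hall i hi, hyB⟩
            rw [hemp] at this
            exact this
          · push_neg at hall
            obtain ⟨i, hi, hni⟩ := hall
            exact Or.inl (mem_iUnion₂.2 ⟨i, hi, hni⟩)
        · exact Or.inr hyB
      have hle : (1:ℝ≥0∞) ≤ (∑ i ∈ I, μ (HS i.1.1 i.1.2)ᶜ) + μ Bᶜ := by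
        calc (1:ℝ≥0∞) = μ ((⋃ i ∈ I, (HS i.1.1 i.1.2)ᶜ) ∪ Bᶜ) := by rw [hcompl, measure_univ]
          _ ≤ μ (⋃ i ∈ I, (HS i.1.1 i.1.2)ᶜ) + μ Bᶜ := measure_union_le _ _
          _ ≤ (∑ i ∈ I, μ (HS i.1.1 i.1.2)ᶜ) + μ Bᶜ :=
            add_le_add_left (measure_biUnion_finset_le I _) _
      have hsum_ne : (∑ i ∈ I, μ (HS i.1.1 i.1.2)ᶜ) ≠ ∞ :=
        (ENNReal.sum_lt_top.2 fun i _ => measure_lt_top μ _).ne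
      have hle' : (1:ℝ) ≤ (∑ i ∈ I, (μ (HS i.1.1 i.1.2)ᶜ).toReal) + (μ Bᶜ).toReal := by
        have h := ENNReal.toReal_mono (ENNReal.add_ne_top.2 ⟨hsum_ne, measure_ne_top μ _⟩) hle
        rwa [ENNReal.toReal_one, ENNReal.toReal_add hsum_ne (measure_ne_top μ _),
          ENNReal.toReal_sum (fun i _ => measure_ne_top μ _)] at h
      have hterm : ∀ i ∈ I, (μ (HS i.1.1 i.1.2)ᶜ).toReal ≤ 1 - t := by
        intro i _
        rw [toReal_compl μ _ (measurableSet_HS _ _)]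
        linarith [i.2]
      have hsum_le : (∑ i ∈ I, (μ (HS i.1.1 i.1.2)ᶜ).toReal) ≤ (I.card : ℝ) * (1 - t) := by
        calc (∑ i ∈ I, (μ (HS i.1.1 i.1.2)ᶜ).toReal) ≤ I.card • (1 - t) :=
            Finset.sum_le_card_nsmul I _ _ hterm
          _ = (I.card : ℝ) * (1 - t) := nsmul_eq_mul _ _
      have hcard : (I.card : ℝ) ≤ (d:ℝ) + 1 := by exact_mod_cast hI
      have ht1' : (0:ℝ) ≤ 1 - t := by linarith
      nlinarith
  obtain ⟨x, hx⟩ := hGne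
  refine ⟨x, mem_iInter₂.2 fun p hp => ?_⟩
  exact (mem_iInter.1 hx ⟨p, hp⟩).1

end TukeyAux

open TukeyAux

/-- Centerpoint theorem for measures: for any probability measure on ℝ^d there is a point
whose Tukey (halfspace) depth is at least `1/(d+1)`. -/
theorem exists_point_tukey_depth_ge (d : ℕ) (μ : Measure (EuclideanSpace ℝ (Fin d)))
    [IsProbabilityMeasure μ] :
    ∃ x : EuclideanSpace ℝ (Fin d),
      ((d : ℝ≥0∞) + 1)⁻¹ ≤
        sInf {r : ℝ≥0∞ | ∃ (u : EuclideanSpace ℝ (Fin d)) (c : ℝ),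
          u ≠ 0 ∧ c ≤ ⟪u, x⟫ ∧ r = μ {y | c ≤ ⟪u, y⟫}} := by
  classical
  have hd1 : (0:ℝ) < (d:ℝ) + 1 := by positivity
  set t : ℕ → ℝ := fun n => (d:ℝ) / (d + 1) + 1 / (n + d + 2) with htdef
  have ht0 : ∀ n, (d:ℝ) / (d + 1) < t n := fun n => by
    have : (0:ℝ) < 1 / ((n:ℝ) + d + 2) := by positivity
    simp only [htdef]; linarith
  have ht1 : ∀ n, t n < 1 := by
    intro n
    have h1 : 1 / ((n:ℝ) + d + 2) < 1 / ((d:ℝ) + 1) :=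
      one_div_lt_one_div_of_lt hd1 (by push_cast; linarith [Nat.cast_nonneg (α := ℝ) n])
    have h2 : (d:ℝ) / (d + 1) + 1 / ((d:ℝ) + 1) = 1 := by field_simp
    simp only [htdef]; linarith
  have hanti : ∀ n, t (n + 1) ≤ t n := by
    intro n
    have : 1 / ((n:ℝ) + 1 + d + 2) ≤ 1 / ((n:ℝ) + d + 2) :=
      one_div_le_one_div_of_le (by positivity) (by linarith)
    simp only [htdef]; push_cast; linarith
  set V : ℕ → Set (EuclideanSpace ℝ (Fin d)) := fun n => K μ (t n) with hVdef
  have hVne : ∀ n, (V n).Nonempty := fun n => K_nonempty μ (ht0 n) (ht1 n).le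
  have hVcl : ∀ n, IsClosed (V n) := fun n => isClosed_K μ (t n)
  have hVsub : ∀ n, V (n + 1) ⊆ V n := fun n => K_mono μ (hanti n)
  have hV0c : IsCompact (V 0) := by
    obtain ⟨R, hR0, hRε⟩ := exists_ball μ (1 - t 0) (by linarith [ht1 0])
    rw [toReal_compl μ _ measurableSet_closedBall] at hRε
    exact (isCompact_closedBall _ _).of_isClosed_subset (hVcl 0)
      (K_subset_ball μ hR0 (by linarith))
  obtain ⟨x, hx⟩ := IsCompact.nonempty_iInter_of_sequence_nonempty_isCompact_isClosed
    V hVsub hVne hV0c hVcl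
  refine ⟨x, le_sInf ?_⟩
  rintro r ⟨u, c, hu, hcx, rfl⟩
  by_contra hlt
  push_neg at hlt
  have hinv_ne : ((d : ℝ≥0∞) + 1)⁻¹ ≠ ∞ := by
    simp [ENNReal.inv_ne_top]
  have hreal : (μ (HS u c)).toReal < ((d:ℝ) + 1)⁻¹ := by
    have h := (ENNReal.toReal_lt_toReal (measure_ne_top μ _) hinv_ne).2 hlt
    rwa [ENNReal.toReal_inv, ENNReal.toReal_add (by simp) (by simp), ENNReal.toReal_natCast,
      ENNReal.toReal_one] at h
  have hcompl : (d:ℝ) / (d + 1) < (μ (HS u c)ᶜ).toReal := by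
    rw [toReal_compl μ _ (measurableSet_HS u c)]
    have : (d:ℝ) / (d + 1) = 1 - ((d:ℝ) + 1)⁻¹ := by field_simp; ring
    linarith [this]
  -- the complement is an increasing union of closed halfspaces
  set W : ℕ → Set (EuclideanSpace ℝ (Fin d)) := fun m => HS (-u) (1 / ((m:ℝ) + 1) - c) with hWdef
  have hWmono : Monotone W := by
    intro m m' hmm' y hy
    have h1 : 1 / ((m':ℝ) + 1) ≤ 1 / ((m:ℝ) + 1) :=
      one_div_le_one_div_of_le (by positivity) (by exact_mod_cast by omega)
    simp only [hWdef, HS, mem_setOf_eq] at hy ⊢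
    linarith
  have hUW : (HS u c)ᶜ = ⋃ m, W m := by
    ext y
    simp only [hWdef, HS, mem_compl_iff, mem_setOf_eq, not_le, mem_iUnion, inner_neg_left]
    constructor
    · intro hy
      obtain ⟨m, hm⟩ := exists_nat_one_div_lt (show (0:ℝ) < c - ⟪u, y⟫ by linarith)
      exact ⟨m, by push_cast at hm ⊢; linarith⟩
    · rintro ⟨m, hm⟩
      have : (0:ℝ) < 1 / ((m:ℝ) + 1) := by positivity
      linarith
  have hμU : μ ((HS u c)ᶜ) = ⨆ m, μ (W m) := by
    rw [hUW, (hWmono.directed_le).measure_iUnion]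
  -- pick a threshold index
  obtain ⟨N, hN⟩ := exists_nat_one_div_lt (show (0:ℝ) < (μ (HS u c)ᶜ).toReal - (d:ℝ)/(d+1) by linarith)
  have htN : t N < (μ (HS u c)ᶜ).toReal := by
    have h1 : 1 / ((N:ℝ) + d + 2) ≤ 1 / ((N:ℝ) + 1) :=
      one_div_le_one_div_of_le (by positivity) (by linarith [Nat.cast_nonneg (α := ℝ) d])
    simp only [htdef]
    linarith
  have htN0 : 0 ≤ t N :=
    le_trans (by positivity : (0:ℝ) ≤ (d:ℝ)/(d+1)) (ht0 N).le
  obtain ⟨m, hm⟩ : ∃ m, ENNReal.ofReal (t N) < μ (W m) := by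
    rw [← lt_iSup_iff, ← hμU]
    exact (ENNReal.ofReal_lt_iff_lt_toReal htN0 (measure_ne_top μ _)).2 htN
  have hmem : t N ≤ (μ (HS (-u) (1 / ((m:ℝ) + 1) - c))).toReal := by
    have := (ENNReal.ofReal_lt_iff_lt_toReal htN0 (measure_ne_top μ _)).1 hm
    exact this.le
  have hxN : x ∈ V N := mem_iInter.1 hx N
  have hxW := mem_iInter₂.1 hxN (-u, 1 / ((m:ℝ) + 1) - c) hmem
  simp only [HS, mem_setOf_eq, inner_neg_left] at hxW
  have : (0:ℝ) < 1 / ((m:ℝ) + 1) := by positivity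
  linarith
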